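/- With the hypotheses of Lemma 2.1 (q'_j = b'q_i + 1, and ‖q'_jβ‖ < ‖q_{i-1}α‖ − b'‖q'_{j-1}β‖), the sum over all (n,m) with 0 ≤ n < q_i, 0 ≤ m < q'_j of the four gap values equals 1; explicitly, q_i q'_j(‖q_{i-1}α‖ − b'‖q'_{j-1}β‖) + q_{i-1}q'_j‖q_iα‖ − b'q'_{j-1}q_i‖q'_jβ‖ = 1. -/

import Mathlib

noncomputable section

/-- distance from `t` to the nearest integer -/
def nint (t : ℝ) : ℝ := |t - round t|

/-- iterates of the Gauss map -/
def gaussIter (α : ℝ) : ℕ → ℝ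
  | 0 => α
  | k + 1 => (Int.fract (gaussIter α k))⁻¹

/-- partial quotients of `α`: `pquot α k` is `a_k` for `k ≥ 1` -/
def pquot (α : ℝ) (k : ℕ) : ℕ := (⌊gaussIter α k⌋).toNat

/-- the pair `(q_{k-1}, q_k)` of denominators of principal convergents of `α` -/
def qpair (α : ℝ) : ℕ → ℕ × ℕ
  | 0 => (0, 1)
  | k + 1 => ((qpair α k).2, pquot α (k + 1) * (qpair α k).2 + (qpair α k).1)

/-- the denominator `q_k` of the `k`-th principal convergent of `α` -/
def qden (α : ℝ) (k : ℕ) : ℕ := (qpair α k).2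

/-- product of fractional parts of Gauss iterates: `bprod x k = |q_k x - p_k|` -/
def bprod (x : ℝ) : ℕ → ℝ
  | 0 => Int.fract x
  | k + 1 => bprod x k * Int.fract (gaussIter x (k + 1))

/-- shifted version: `bmprod x k = bprod x (k-1)`, with value 1 at `k = 0` -/
def bmprod (x : ℝ) : ℕ → ℝ
  | 0 => 1
  | k + 1 => bprod x k

end

section Lemmas

lemma gaussIter_irrational {x : ℝ} (hx : Irrational x) : ∀ k, Irrational (gaussIter x k) := by
  intro k
  induction k with
  | zero => exact hx
  | succ k ih =>
      have h2 : Irrational (gaussIter x k - (⌊gaussIter x k⌋ : ℤ)) :=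
        ih.sub_intCast ⌊gaussIter x k⌋
      have h3 : Irrational (Int.fract (gaussIter x k)) := by
        rw [Int.fract]; exact_mod_cast h2
      exact h3.inv

lemma fract_gaussIter_pos {x : ℝ} (hx : Irrational x) (k : ℕ) :
    0 < Int.fract (gaussIter x k) := by
  rcases lt_or_eq_of_le (Int.fract_nonneg (gaussIter x k)) with h | h
  · exact h
  · exfalso
    have hirr := gaussIter_irrational hx k
    have heq : gaussIter x k = (⌊gaussIter x k⌋ : ℝ) := by
      have h2 := Int.fract_add_floor (gaussIter x k)
      linarith [h.symm]
    exact hirr.ne_int _ heq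

lemma one_lt_gaussIter_succ {x : ℝ} (hx : Irrational x) (k : ℕ) :
    1 < gaussIter x (k + 1) := by
  have h0 := fract_gaussIter_pos hx k
  have h1 : Int.fract (gaussIter x k) < 1 := Int.fract_lt_one _
  show 1 < (Int.fract (gaussIter x k))⁻¹
  exact (one_lt_inv_iff₀).2 ⟨h0, h1⟩

lemma floor_gaussIter_succ_pos {x : ℝ} (hx : Irrational x) (k : ℕ) :
    (1 : ℤ) ≤ ⌊gaussIter x (k + 1)⌋ :=
  Int.le_floor.2 (by exact_mod_cast (one_lt_gaussIter_succ hx k).le)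

lemma one_le_pquot_succ {x : ℝ} (hx : Irrational x) (k : ℕ) : 1 ≤ pquot x (k + 1) := by
  have h2 := floor_gaussIter_succ_pos hx k
  unfold pquot
  omega

lemma pquot_succ_cast {x : ℝ} (hx : Irrational x) (k : ℕ) :
    ((pquot x (k + 1) : ℝ)) = (⌊gaussIter x (k + 1)⌋ : ℝ) := by
  have h2 := floor_gaussIter_succ_pos hx k
  unfold pquot
  rw [← Int.cast_natCast, Int.toNat_of_nonneg (by omega)]

lemma fract_eq_sub_pquot {x : ℝ} (hx : Irrational x) (k : ℕ) :
    Int.fract (gaussIter x (k + 1)) = gaussIter x (k + 1) - (pquot x (k + 1) : ℝ) := by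
  rw [pquot_succ_cast hx, Int.fract]

lemma bprod_pos {x : ℝ} (hx : Irrational x) : ∀ k, 0 < bprod x k := by
  intro k
  induction k with
  | zero => exact fract_gaussIter_pos hx 0
  | succ k ih => exact mul_pos ih (fract_gaussIter_pos hx (k + 1))

lemma bprod_succ_lt {x : ℝ} (hx : Irrational x) (k : ℕ) : bprod x (k + 1) < bprod x k := by
  have h := bprod_pos hx k
  have h1 : Int.fract (gaussIter x (k + 1)) < 1 := Int.fract_lt_one _
  have h0 := fract_gaussIter_pos hx (k + 1)
  calc bprod x (k + 1) = bprod x k * Int.fract (gaussIter x (k + 1)) := rfl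
    _ < bprod x k * 1 := by nlinarith
    _ = bprod x k := mul_one _

lemma bprod_eq_bmprod_mul (x : ℝ) : ∀ k, bprod x k = bmprod x k * Int.fract (gaussIter x k)
  | 0 => by rw [show bmprod x 0 = 1 from rfl, one_mul]; rfl
  | k + 1 => rfl

lemma bprod_mul_gaussIter_succ {x : ℝ} (hx : Irrational x) (k : ℕ) :
    bprod x k * gaussIter x (k + 1) = bmprod x k := by
  have h0 := (fract_gaussIter_pos hx k).ne'
  rw [bprod_eq_bmprod_mul]
  show bmprod x k * Int.fract (gaussIter x k) * (Int.fract (gaussIter x k))⁻¹ = bmprod x k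
  field_simp

lemma qden_succ (x : ℝ) (k : ℕ) :
    qden x (k + 1) = pquot x (k + 1) * qden x k + (qpair x k).1 := rfl

lemma qpair_fst_succ (x : ℝ) (k : ℕ) : (qpair x (k + 1)).1 = qden x k := rfl

lemma one_le_qden {x : ℝ} (hx : Irrational x) : ∀ k, 1 ≤ qden x k := by
  intro k
  induction k with
  | zero => exact le_refl 1
  | succ k ih =>
      have h1 := one_le_pquot_succ hx k
      rw [qden_succ]
      nlinarith

lemma two_le_qden {x : ℝ} (hx : Irrational x) (k : ℕ) : 2 ≤ qden x (k + 2) := by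
  have h1 := one_le_pquot_succ hx (k + 1)
  have h2 := one_le_qden hx (k + 1)
  have h3 := one_le_qden hx k
  rw [qden_succ, qpair_fst_succ]
  nlinarith

lemma qden_lt_succ {x : ℝ} (hx : Irrational x) (k : ℕ) :
    qden x (k + 1) < qden x (k + 2) := by
  have h1 := one_le_pquot_succ hx (k + 1)
  have h2 := one_le_qden hx (k + 1)
  have h3 := one_le_qden hx k
  rw [qden_succ x (k + 1), qpair_fst_succ]
  nlinarith

lemma qden_one_eq (x : ℝ) : qden x 1 = pquot x 1 := by
  rw [qden_succ]
  show pquot x 1 * 1 + 0 = pquot x 1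
  omega

/-- the fundamental identity `q_{k+1} B_k + q_k B_{k+1} = 1` -/
lemma qden_bprod_identity {x : ℝ} (hx : Irrational x) (hx0 : 0 < x) (hx1 : x < 1) : ∀ k,
    (qden x (k + 1) : ℝ) * bprod x k + (qden x k : ℝ) * bprod x (k + 1) = 1 := by
  intro k
  induction k with
  | zero =>
      have hfr : Int.fract x = x := Int.fract_eq_self.2 ⟨hx0.le, hx1⟩
      have hg1 : gaussIter x 1 = x⁻¹ := by
        show (Int.fract (gaussIter x 0))⁻¹ = x⁻¹
        rw [show gaussIter x 0 = x from rfl, hfr]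
      have hb0 : bprod x 0 = x := hfr
      have hb1 : bprod x 1 = x * Int.fract (gaussIter x 1) := by
        rw [show bprod x 1 = bprod x 0 * Int.fract (gaussIter x 1) from rfl, hb0]
      have hq1 : (qden x 1 : ℝ) = (pquot x 1 : ℝ) := by rw [qden_one_eq]
      have hfr1 : Int.fract (gaussIter x 1) = gaussIter x 1 - (pquot x 1 : ℝ) :=
        fract_eq_sub_pquot hx 0
      have hq0 : (qden x 0 : ℝ) = 1 := by norm_num [qden, qpair]
      rw [hq0, hb0, hb1, hq1, hfr1, hg1]
      field_simp
      ring
  | succ k ih =>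
      have hrec : bprod x (k + 1) * gaussIter x (k + 2) = bprod x k :=
        bprod_mul_gaussIter_succ hx (k + 1)
      have hq : (qden x (k + 2) : ℝ)
          = (pquot x (k + 2) : ℝ) * (qden x (k + 1) : ℝ) + (qden x k : ℝ) := by
        rw [qden_succ x (k + 1), qpair_fst_succ]; push_cast; ring
      have hb : bprod x (k + 2)
          = bprod x (k + 1) * (gaussIter x (k + 2) - (pquot x (k + 2) : ℝ)) := by
        rw [show bprod x (k + 2) = bprod x (k + 1) * Int.fract (gaussIter x (k + 2)) from rfl,
          fract_eq_sub_pquot hx (k + 1)]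
      rw [hq, hb]
      nlinarith [hrec, ih]

/-- `q_k x` differs from some integer by exactly `± bprod x k` -/
lemma exists_int_qden_mul {x : ℝ} (hx : Irrational x) (hx0 : 0 < x) (hx1 : x < 1) : ∀ k,
    ∃ pm p : ℤ,
    ((qpair x k).1 : ℝ) * x - (pm : ℝ) = (-1 : ℝ) ^ (k + 1) * bmprod x k ∧
    ((qpair x k).2 : ℝ) * x - (p : ℝ) = (-1 : ℝ) ^ k * bprod x k := by
  intro k
  induction k with
  | zero =>
      refine ⟨1, 0, by norm_num [qpair, bmprod], ?_⟩
      have hfr : Int.fract x = x := Int.fract_eq_self.2 ⟨hx0.le, hx1⟩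
      show ((1 : ℕ) : ℝ) * x - ((0 : ℤ) : ℝ) = (-1 : ℝ) ^ 0 * bprod x 0
      rw [show bprod x 0 = Int.fract x from rfl, hfr]
      norm_num
  | succ k ih =>
      obtain ⟨pm, p, h1, h2⟩ := ih
      refine ⟨p, (pquot x (k + 1) : ℤ) * p + pm, ?_, ?_⟩
      · show ((qpair x k).2 : ℝ) * x - (p : ℝ) = (-1 : ℝ) ^ (k + 1 + 1) * bmprod x (k + 1)
        rw [show ((-1 : ℝ)) ^ (k + 1 + 1) = (-1 : ℝ) ^ k by ring,
          show bmprod x (k + 1) = bprod x k from rfl]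
        exact h2
      have hq : ((qpair x (k + 1)).2 : ℝ)
          = (pquot x (k + 1) : ℝ) * ((qpair x k).2 : ℝ) + ((qpair x k).1 : ℝ) := by
        show ((pquot x (k + 1) * (qpair x k).2 + (qpair x k).1 : ℕ) : ℝ) = _
        push_cast; ring
      have hb : bprod x (k + 1)
          = bprod x k * (gaussIter x (k + 1) - (pquot x (k + 1) : ℝ)) := by
        rw [show bprod x (k + 1) = bprod x k * Int.fract (gaussIter x (k + 1)) from rfl,
          fract_eq_sub_pquot hx k]
      have hrec : bprod x k * gaussIter x (k + 1) = bmprod x k :=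
        bprod_mul_gaussIter_succ hx k
      rw [hq]
      push_cast
      rw [hb]
      have e1 : (-1 : ℝ) ^ (k + 1) = -(-1 : ℝ) ^ k := by ring
      rw [e1] at h1
      rw [e1]
      linear_combination ((pquot x (k + 1) : ℝ)) * h2 + h1 + (-1 : ℝ) ^ k * hrec

lemma nint_qden {x : ℝ} (hx : Irrational x) (hx0 : 0 < x) (hx1 : x < 1)
    (k : ℕ) (hhalf : bprod x k < 1 / 2) :
    nint ((qden x k : ℝ) * x) = bprod x k := by
  obtain ⟨pm, p, _, h2⟩ := exists_int_qden_mul hx hx0 hx1 k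
  have habs : |(qden x k : ℝ) * x - (p : ℝ)| = bprod x k := by
    rw [show ((qden x k : ℕ) : ℝ) = ((qpair x k).2 : ℝ) from rfl, h2, abs_mul,
      abs_pow, abs_neg, abs_one, one_pow, one_mul, abs_of_pos (bprod_pos hx k)]
  have hle := abs_le.1 habs.le
  have hround : round ((qden x k : ℝ) * x) = p := by
    rw [round_eq, Int.floor_eq_iff]
    constructor
    · push_cast; linarith
    · push_cast; linarith
  rw [nint, hround, habs]

lemma bprod_succ_lt_half {x : ℝ} (hx : Irrational x) (hx0 : 0 < x) (hx1 : x < 1) (k : ℕ) :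
    bprod x (k + 1) < 1 / 2 := by
  have hid := qden_bprod_identity hx hx0 hx1 (k + 1)
  have h2 : (2 : ℝ) ≤ (qden x (k + 2) : ℝ) := by exact_mod_cast two_le_qden hx k
  have hp1 := bprod_pos hx (k + 1)
  have hp2 := bprod_pos hx (k + 2)
  have hq : (0 : ℝ) < (qden x (k + 1) : ℝ) := by
    exact_mod_cast Nat.lt_of_lt_of_le Nat.zero_lt_one (one_le_qden hx _)
  nlinarith

lemma nint_qden_succ {x : ℝ} (hx : Irrational x) (hx0 : 0 < x) (hx1 : x < 1) (k : ℕ) :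
    nint ((qden x (k + 1) : ℝ) * x) = bprod x (k + 1) :=
  nint_qden hx hx0 hx1 _ (bprod_succ_lt_half hx hx0 hx1 k)

end Lemmas


theorem sum_of_gaps_equals_one (α β : ℝ)
    (hα0 : 0 < α) (hα1 : α < 1) (hβ0 : 0 < β) (hβ1 : β < 1)
    (hα : Irrational α) (hβ : Irrational β)
    (i j : ℕ) (hi : 1 ≤ i) (hj : 1 ≤ j) (b' : ℕ) (hb' : 0 < b')
    (hrel : qden β j = b' * qden α i + 1)
    (hass : nint ((qden β j : ℝ) * β)
      < nint ((qden α (i - 1) : ℝ) * α) - (b' : ℝ) * nint ((qden β (j - 1) : ℝ) * β)) :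
    (qden α i : ℝ) * (qden β j : ℝ)
        * (nint ((qden α (i - 1) : ℝ) * α) - (b' : ℝ) * nint ((qden β (j - 1) : ℝ) * β))
      + (qden α (i - 1) : ℝ) * (qden β j : ℝ) * nint ((qden α i : ℝ) * α)
      - (b' : ℝ) * (qden β (j - 1) : ℝ) * (qden α i : ℝ) * nint ((qden β j : ℝ) * β) = 1 := by
  obtain ⟨i', rfl⟩ : ∃ i', i = i' + 1 := ⟨i - 1, by omega⟩
  obtain ⟨j', rfl⟩ : ∃ j', j = j' + 1 := ⟨j - 1, by omega⟩
  simp only [Nat.add_sub_cancel] at *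
  -- nint values at the successor indices
  have hnα : nint ((qden α (i' + 1) : ℝ) * α) = bprod α (i' + 1) :=
    nint_qden_succ hα hα0 hα1 i'
  have hnβ : nint ((qden β (j' + 1) : ℝ) * β) = bprod β (j' + 1) :=
    nint_qden_succ hβ hβ0 hβ1 j'
  -- β < 1/2 when j' = 0, from hrel
  have hnβm : nint ((qden β j' : ℝ) * β) = bprod β j' := by
    cases j' with
    | zero =>
        have hrel1 : qden β 1 = b' * qden α (i' + 1) + 1 := by simpa using hrel
        have hq1 : 2 ≤ qden β 1 := by
          have hprod : 1 ≤ b' * qden α (i' + 1) :=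
            Nat.one_le_iff_ne_zero.2 (Nat.mul_ne_zero (by omega)
              (by have := one_le_qden hα (i' + 1); omega))
          omega
        have hβhalf : β < 1 / 2 := by
          have h2 : (2 : ℤ) ≤ ⌊gaussIter β 1⌋ := by
            have : 2 ≤ pquot β 1 := by
              have : qden β 1 = pquot β 1 := by
                rw [qden_succ]; simp [qden, qpair]
              omega
            unfold pquot at this; omega
          have hfl : (2 : ℝ) ≤ gaussIter β 1 := by
            calc (2 : ℝ) = ((2 : ℤ) : ℝ) := by norm_num
            _ ≤ (⌊gaussIter β 1⌋ : ℝ) := by exact_mod_cast h2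
            _ ≤ gaussIter β 1 := Int.floor_le _
          have hg1 : gaussIter β 1 = β⁻¹ := by
            show (Int.fract (gaussIter β 0))⁻¹ = β⁻¹
            rw [show gaussIter β 0 = β from rfl, Int.fract_eq_self.2 ⟨hβ0.le, hβ1⟩]
          rw [hg1] at hfl
          have h2b : β ≤ 2⁻¹ := (le_inv_comm₀ (by norm_num) hβ0).1 hfl
          have hne : β ≠ 1 / 2 := fun h => by
            exact (hβ.ne_rat (1 / 2)) (by rw [h]; norm_num)
          cases lt_or_eq_of_le (show β ≤ 1 / 2 by rw [show (1:ℝ)/2 = 2⁻¹ by norm_num]; exact h2b) with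
          | inl h => exact h
          | inr h => exact absurd h hne
        have hb0 : bprod β 0 = β := Int.fract_eq_self.2 ⟨hβ0.le, hβ1⟩
        have : nint ((qden β 0 : ℝ) * β) = bprod β 0 :=
          nint_qden hβ hβ0 hβ1 0 (by rw [hb0]; linarith)
        exact this
    | succ m => exact nint_qden_succ hβ hβ0 hβ1 m
  -- identity for β
  have keyβ : (qden β (j' + 1) : ℝ) * bprod β j' + (qden β j' : ℝ) * bprod β (j' + 1) = 1 :=
    qden_bprod_identity hβ hβ0 hβ1 j'
  -- case analysis on the α side
  by_cases hnαm : nint ((qden α i' : ℝ) * α) = bprod α i'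
  · -- main computation
    have keyα : (qden α (i' + 1) : ℝ) * bprod α i' + (qden α i' : ℝ) * bprod α (i' + 1) = 1 :=
      qden_bprod_identity hα hα0 hα1 i'
    have hrelR : (qden β (j' + 1) : ℝ) = (b' : ℝ) * (qden α (i' + 1) : ℝ) + 1 := by
      exact_mod_cast congrArg (Nat.cast : ℕ → ℝ) hrel
    rw [hnα, hnβ, hnαm, hnβm]
    linear_combination (qden β (j' + 1) : ℝ) * keyα
      - (b' : ℝ) * (qden α (i' + 1) : ℝ) * keyβ + hrelR
  · -- impossible case: i' = 0 and α > 1/2; derive contradiction from hass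
    exfalso
    -- first, i' must be 0
    have hi0 : i' = 0 := by
      by_contra h
      obtain ⟨m, rfl⟩ : ∃ m, i' = m + 1 := ⟨i' - 1, by omega⟩
      exact hnαm (nint_qden_succ hα hα0 hα1 m)
    subst hi0
    have hb0α : bprod α 0 = α := Int.fract_eq_self.2 ⟨hα0.le, hα1⟩
    -- α > 1/2 (else nint would equal bprod)
    have hαhalf : 1 / 2 < α := by
      by_contra h
      push_neg at h
      have hne : α ≠ 1 / 2 := fun h => (hα.ne_rat (1 / 2)) (by rw [h]; norm_num)
      have : α < 1 / 2 := lt_of_le_of_ne h hne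
      exact hnαm (nint_qden hα hα0 hα1 0 (by rw [hb0α]; linarith))
    -- q_1 = 1 for α
    have hfrα : Int.fract α = α := Int.fract_eq_self.2 ⟨hα0.le, hα1⟩
    have hq1α : qden α 1 = 1 := by
      have hg1 : gaussIter α 1 = α⁻¹ := by
        show (Int.fract (gaussIter α 0))⁻¹ = α⁻¹
        rw [show gaussIter α 0 = α from rfl, hfrα]
      have h1 : (1 : ℝ) < α⁻¹ := (one_lt_inv_iff₀).2 ⟨hα0, hα1⟩
      have h2 : α⁻¹ < 2 := by
        refine (inv_lt_comm₀ hα0 (by norm_num : (0:ℝ) < 2)).2 ?_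
        rw [show (2:ℝ)⁻¹ = 1 / 2 by norm_num]
        linarith
      have hfl : ⌊gaussIter α 1⌋ = 1 := by
        rw [hg1]; exact Int.floor_eq_iff.2 ⟨by push_cast; linarith, by push_cast; linarith⟩
      have : pquot α 1 = 1 := by unfold pquot; rw [hfl]; rfl
      rw [qden_succ, this]; simp [qden, qpair]
    -- nint at q_0 α = nint α = 1 - α
    have hq0α : (qden α 0 : ℝ) = 1 := by norm_num [qden, qpair]
    have hnint_α : nint ((qden α 0 : ℝ) * α) = 1 - α := by
      rw [hq0α, one_mul, nint]
      have hr : round α = 1 := by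
        rw [round_eq, Int.floor_eq_iff] <;> constructor <;> push_cast <;> linarith
      rw [hr]
      push_cast
      rw [abs_of_nonpos (by linarith)]
      ring
    rw [hnint_α, hnβ, hnβm] at hass
    -- set up the contradiction
    set u := bprod β j' with hu
    set v := bprod β (j' + 1) with hv
    have hupos : 0 < u := bprod_pos hβ j'
    have hvpos : 0 < v := bprod_pos hβ (j' + 1)
    have hvu : v < u := bprod_succ_lt hβ j'
    have hQjnat : qden β (j' + 1) = b' + 1 := by
      have h := hrel
      simp only [Nat.zero_add] at h
      rw [hq1α] at h
      omega
    have hQj : (qden β (j' + 1) : ℝ) = (b' : ℝ) + 1 := by exact_mod_cast hQjnat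
    have hQjm_le : (qden β j' : ℝ) ≤ (b' : ℝ) := by
      have h1 : qden β j' ≤ b' := by
        cases j' with
        | zero =>
            have : qden β 0 = 1 := rfl
            omega
        | succ m =>
            have hlt := qden_lt_succ hβ (x := β) m
            have h2 : qden β (m + 2) = b' + 1 := hQjnat
            omega
      exact_mod_cast h1
    have hQjm_pos : (1 : ℝ) ≤ (qden β j' : ℝ) := by
      exact_mod_cast one_le_qden hβ (x := β) j'
    have hb'1 : (1 : ℝ) ≤ (b' : ℝ) := by exact_mod_cast hb'
    rw [hQj] at keyβ
    -- keyβ : (b' + 1) * u + q' * v = 1, hass: v < (1 - α) - b' * u, α > 1/2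
    -- 1 = b'u + v + (u + (q'-1)v) < 1/2 + u + (b'-1)u = 1/2 + b'u < 1/2 + 1/2
    nlinarith [mul_le_mul_of_nonneg_right hQjm_le hvpos.le,
      mul_le_mul_of_nonneg_right hb'1 (sub_pos.2 hvu).le]
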